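/- arXiv:1701.06955 — 7 statements merged into one kernel-verified Lean document; each statement's English description precedes it below -/
import Mathlib

section
/- Under the FK-dependent distribution on {1,...,K}^n, each coordinate is identically distributed: for every r ∈ {1,...,n} and every category i, P(ε_r = i) = p_i. -/
open Finset

/-- Probability of an FK-dependent sequence `e : Fin N → Fin K`:
`P(e) = p_{e₀} · ∏_{j≠0} (pᵢ⁺)^{[e_j = e₀]} · ∏_{l≠e₀} (p_l⁻)^{[e_j = l]}`
with `pᵢ⁺ = pᵢ + δ(1−pᵢ)` and `pᵢ⁻ = pᵢ(1−δ)`. -/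
noncomputable def fkP {K N : ℕ} [NeZero N] (p : Fin K → ℝ) (δ : ℝ)
    (e : Fin N → Fin K) : ℝ :=
  p (e 0) * ∏ j ∈ Finset.univ.filter (fun j : Fin N => j ≠ 0),
    (if e j = e 0 then p (e 0) + δ * (1 - p (e 0)) else p (e j) * (1 - δ))

/-- Per-coordinate factor of `fkP` for first coordinate `a`. -/
noncomputable def fkBase {K N : ℕ} [NeZero N] (p : Fin K → ℝ) (δ : ℝ)
    (a : Fin K) (j : Fin N) (c : Fin K) : ℝ :=
  if j = 0 then (if c = a then p a else 0)
  else (if c = a then p a + δ * (1 - p a) else p c * (1 - δ))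

/-- Indicator factor for the constraint `e r = i`. -/
noncomputable def fkInd {K N : ℕ} (r : Fin N) (i : Fin K)
    (j : Fin N) (c : Fin K) : ℝ :=
  if j = r then (if c = i then 1 else 0) else 1

/-- each coordinate of an FK-dependent sequence is identically
distributed: `P(ε_r = i) = p_i` for every coordinate `r` and category `i`. -/
theorem fkP_identically_distributed (K N : ℕ) (hK : 1 ≤ K) [NeZero N]
    (p : Fin K → ℝ) (hp : ∀ i, 0 < p i ∧ p i < 1) (hsum : ∑ i, p i = 1)
    (δ : ℝ) (hδ0 : 0 ≤ δ) (hδ1 : δ ≤ 1) (r : Fin N) (i : Fin K) :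
    ∑ e ∈ Finset.univ.filter (fun e : Fin N → Fin K => e r = i), fkP p δ e
      = p i := by
  classical
  set g : Fin K → Fin N → Fin K → ℝ :=
    fun a j c => fkInd r i j c * fkBase p δ a j c with hg
  -- product of indicators
  have hprod_ind : ∀ e : Fin N → Fin K,
      (∏ j, fkInd r i j (e j)) = if e r = i then 1 else 0 := by
    intro e
    unfold fkInd
    rw [Finset.prod_eq_single r (fun j _ hj => if_neg hj)
      (fun h => absurd (mem_univ r) h)]
    simp
  -- product of base factors equals fkP
  have hprod_base : ∀ e : Fin N → Fin K,
      (∏ j, fkBase p δ (e 0) j (e j)) = fkP p δ e := by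
    intro e
    rw [Finset.prod_eq_mul_prod_sdiff_singleton_of_mem (mem_univ (0 : Fin N))]
    unfold fkP
    congr 1
    · simp [fkBase]
    · rw [show Finset.univ.filter (fun j : Fin N => j ≠ 0)
        = Finset.univ \ {0} from by ext j; simp]
      refine Finset.prod_congr rfl fun j hj => ?_
      simp only [mem_sdiff, mem_singleton] at hj
      simp [fkBase, hj.2]
  -- base product vanishes when a ≠ e 0
  have hzero : ∀ (a : Fin K) (e : Fin N → Fin K), e 0 ≠ a →
      (∏ j, fkBase p δ a j (e j)) = 0 := by
    intro a e h
    exact Finset.prod_eq_zero (mem_univ (0 : Fin N)) (by simp [fkBase, h])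
  -- rewrite each summand as a sum over a of full products
  have hswap : ∀ e : Fin N → Fin K,
      (if e r = i then fkP p δ e else 0) = ∑ a, ∏ j, g a j (e j) := by
    intro e
    have h1 : ∀ a : Fin K, (∏ j, g a j (e j))
        = (∏ j, fkInd r i j (e j)) * ∏ j, fkBase p δ a j (e j) :=
      fun a => Finset.prod_mul_distrib
    rw [Finset.sum_congr rfl (fun a _ => h1 a), ← Finset.mul_sum,
      Finset.sum_eq_single (e 0)
        (fun a _ ha => hzero a e (fun h => ha h.symm))
        (fun h => absurd (mem_univ (e 0)) h),
      hprod_ind, hprod_base]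
    split <;> simp
  -- column sums away from 0 and r are 1
  have hcol1 : ∀ (a : Fin K) (j : Fin N), j ≠ 0 → j ≠ r →
      (∑ c, g a j c) = 1 := by
    intro a j hj0 hjr
    have h1 : (∑ c, g a j c) = ∑ c, (p c * (1 - δ)
        + (if c = a then (p a + δ * (1 - p a)) - p a * (1 - δ) else 0)) := by
      refine Finset.sum_congr rfl fun c _ => ?_
      simp only [hg, fkInd, fkBase, if_neg hjr, if_neg hj0, one_mul]
      split_ifs with h
      · subst h; ring
      · ring
    rw [h1, Finset.sum_add_distrib, Finset.sum_ite_eq' Finset.univ a,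
      if_pos (mem_univ a), ← Finset.sum_mul, hsum]
    ring
  rw [Finset.sum_filter]
  calc ∑ e : Fin N → Fin K, (if e r = i then fkP p δ e else 0)
      = ∑ e : Fin N → Fin K, ∑ a, ∏ j, g a j (e j) :=
        Finset.sum_congr rfl (fun e _ => hswap e)
    _ = ∑ a, ∑ e : Fin N → Fin K, ∏ j, g a j (e j) := Finset.sum_comm
    _ = ∑ a, ∏ j, ∑ c, g a j c := by
        refine Finset.sum_congr rfl fun a _ => ?_
        rw [Finset.prod_univ_sum, Fintype.piFinset_univ]
    _ = p i := by
        by_cases hr : r = 0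
        · -- r = 0 : the constrained coordinate is the first one
          have hS0 : ∀ a : Fin K, (∑ c, g a 0 c) = if i = a then p a else 0 := by
            intro a
            have hb : ∀ c : Fin K, g a 0 c
                = if c = i then (if i = a then p a else 0) else 0 := by
              intro c
              rcases eq_or_ne c i with h1 | h1
              · subst h1
                simp [hg, fkInd, fkBase, hr, eq_comm]
              · simp [hg, fkInd, fkBase, hr, h1]
            rw [Finset.sum_congr rfl fun c _ => hb c,
              Finset.sum_ite_eq' Finset.univ i, if_pos (mem_univ i)]
          have hPa : ∀ a : Fin K, (∏ j, ∑ c, g a j c)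
              = if i = a then p a else 0 := by
            intro a
            rw [Finset.prod_eq_single 0
              (fun j _ hj => hcol1 a j hj (hr ▸ hj))
              (fun h => absurd (mem_univ (0 : Fin N)) h), hS0]
          rw [Finset.sum_congr rfl fun a _ => hPa a,
            Finset.sum_ite_eq Finset.univ i, if_pos (mem_univ i)]
        · -- r ≠ 0
          have h0r : (0 : Fin N) ≠ r := fun h => hr h.symm
          have hS0 : ∀ a : Fin K, (∑ c, g a 0 c) = p a := by
            intro a
            have hb : ∀ c : Fin K, g a 0 c = if c = a then p a else 0 := by
              intro c
              simp [hg, fkInd, fkBase, h0r]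
            rw [Finset.sum_congr rfl fun c _ => hb c,
              Finset.sum_ite_eq' Finset.univ a, if_pos (mem_univ a)]
          have hSr : ∀ a : Fin K, (∑ c, g a r c)
              = if i = a then p a + δ * (1 - p a) else p i * (1 - δ) := by
            intro a
            have hb : ∀ c : Fin K, g a r c = if c = i
                then (if i = a then p a + δ * (1 - p a) else p i * (1 - δ))
                else 0 := by
              intro c
              rcases eq_or_ne c i with h1 | h1
              · subst h1
                simp [hg, fkInd, fkBase, hr, eq_comm]
              · simp [hg, fkInd, fkBase, hr, h1]
            rw [Finset.sum_congr rfl fun c _ => hb c,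
              Finset.sum_ite_eq' Finset.univ i, if_pos (mem_univ i)]
          have hPa : ∀ a : Fin K, (∏ j, ∑ c, g a j c)
              = p a * (if i = a then p a + δ * (1 - p a) else p i * (1 - δ)) := by
            intro a
            have hsub : (∏ j ∈ ({0, r} : Finset (Fin N)), ∑ c, g a j c)
                = ∏ j, ∑ c, g a j c := by
              refine Finset.prod_subset (Finset.subset_univ _) fun j _ hj => ?_
              simp only [mem_insert, mem_singleton, not_or] at hj
              exact hcol1 a j hj.1 hj.2
            rw [← hsub, Finset.prod_pair h0r, hS0, hSr]
          rw [Finset.sum_congr rfl fun a _ => hPa a]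
          have h2 : ∀ a : Fin K,
              p a * (if i = a then p a + δ * (1 - p a) else p i * (1 - δ))
              = p a * (p i * (1 - δ))
                + (if i = a then
                    p a * ((p a + δ * (1 - p a)) - p i * (1 - δ)) else 0) := by
            intro a
            split_ifs with h
            · ring
            · ring
          rw [Finset.sum_congr rfl fun a _ => h2 a, Finset.sum_add_distrib,
            Finset.sum_ite_eq Finset.univ i, if_pos (mem_univ i),
            ← Finset.sum_mul, hsum]
          ring
end

section
/- The cross-covariance between indicator variables of the first and any later coordinate is Cov([ε_1 = i],[ε_τ = j]) = δ·p_i(1−p_i) if i = j and −δ·p_i·p_j if i ≠ j, for all τ ≥ 2. -/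
open Finset

/-- Expectation of a real-valued function of an FK-dependent sequence. -/
noncomputable def fkE {K N : ℕ} [NeZero N] (p : Fin K → ℝ) (δ : ℝ)
    (f : (Fin N → Fin K) → ℝ) : ℝ :=
  ∑ e : Fin N → Fin K, fkP p δ e * f e

section aux
variable {K : ℕ} (p : Fin K → ℝ) (δ : ℝ)

lemma sum_w (hsum : ∑ i, p i = 1) (a : Fin K) :
    ∑ c, (if c = a then p a + δ * (1 - p a) else p c * (1 - δ)) = 1 := by
  rw [← Finset.add_sum_erase _ _ (mem_univ a), if_pos rfl]
  have h2 : ∑ c ∈ univ.erase a, (if c = a then p a + δ * (1 - p a) else p c * (1 - δ))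
      = (∑ c ∈ univ.erase a, p c) * (1 - δ) := by
    rw [Finset.sum_mul]
    exact Finset.sum_congr rfl fun c hc => if_neg (Finset.ne_of_mem_erase hc)
  have h3 : ∑ c ∈ univ.erase a, p c = 1 - p a := by
    rw [Finset.sum_erase_eq_sub (mem_univ a), hsum]
  rw [h2, h3]; ring

lemma sum_pw (hsum : ∑ i, p i = 1) (j : Fin K) :
    ∑ a, p a * (if j = a then p a + δ * (1 - p a) else p j * (1 - δ)) = p j := by
  rw [← Finset.add_sum_erase _ _ (mem_univ j), if_pos rfl]
  have h2 : ∑ a ∈ univ.erase j, p a * (if j = a then p a + δ * (1 - p a) else p j * (1 - δ))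
      = (∑ a ∈ univ.erase j, p a) * (p j * (1 - δ)) := by
    rw [Finset.sum_mul]
    refine Finset.sum_congr rfl fun a ha => ?_
    rw [if_neg (Ne.symm (Finset.ne_of_mem_erase ha))]
  have h3 : ∑ a ∈ univ.erase j, p a = 1 - p j := by
    rw [Finset.sum_erase_eq_sub (mem_univ j), hsum]
  rw [h2, h3]; ring

end aux


lemma fkE_two {K N : ℕ} [NeZero N] (p : Fin K → ℝ) (δ : ℝ)
    (hsum : ∑ i, p i = 1) (τ : Fin N) (hτ : τ ≠ 0)
    (f : (Fin N → Fin K) → ℝ) (F : Fin K → Fin K → ℝ)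
    (hf : ∀ e, f e = F (e 0) (e τ)) :
    fkE p δ f
      = ∑ a, p a * ∑ c, (if c = a then p a + δ * (1 - p a) else p c * (1 - δ)) * F a c := by
  classical
  set h : Fin K → Fin N → Fin K → ℝ := fun a j c =>
    if j = 0 then (if c = a then p a else 0)
    else (if c = a then p a + δ * (1 - p a) else p c * (1 - δ)) * (if j = τ then F a c else 1)
    with hh
  have hτmem : τ ∈ (univ : Finset (Fin N)).erase 0 := Finset.mem_erase.2 ⟨hτ, mem_univ τ⟩
  have step1 : ∀ e : Fin N → Fin K,
      fkP p δ e * f e = ∑ a, ∏ j, h a j (e j) := by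
    intro e
    have hsplit : ∀ a, ∏ j, h a j (e j)
        = h a 0 (e 0) * ∏ j ∈ univ.erase 0, h a j (e j) :=
      fun a => (Finset.mul_prod_erase univ _ (mem_univ 0)).symm
    have h0 : ∀ a, h a 0 (e 0) = if e 0 = a then p a else 0 := by
      intro a; simp only [hh, if_pos rfl]
    have key : ∀ a, ∏ j, h a j (e j)
        = if e 0 = a then p a * ∏ j ∈ univ.erase 0, h a j (e j) else 0 := by
      intro a
      rw [hsplit a, h0 a, ite_mul, zero_mul]
    simp only [key]
    rw [Finset.sum_ite_eq univ (e 0), if_pos (mem_univ _)]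
    have hprod : ∏ j ∈ univ.erase 0, h (e 0) j (e j)
        = (∏ j ∈ univ.erase 0,
            (if e j = e 0 then p (e 0) + δ * (1 - p (e 0)) else p (e j) * (1 - δ)))
          * F (e 0) (e τ) := by
      have hcongr : ∏ j ∈ univ.erase 0, h (e 0) j (e j)
          = ∏ j ∈ univ.erase 0,
              ((if e j = e 0 then p (e 0) + δ * (1 - p (e 0)) else p (e j) * (1 - δ))
                * (if j = τ then F (e 0) (e j) else 1)) := by
        refine Finset.prod_congr rfl fun j hj => ?_
        simp only [hh]
        rw [if_neg (Finset.ne_of_mem_erase hj)]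
      rw [hcongr, Finset.prod_mul_distrib]
      congr 1
      rw [Finset.prod_eq_single_of_mem τ hτmem (fun b _ hb => if_neg hb), if_pos rfl]
    rw [hf e, fkP]
    rw [Finset.filter_ne' univ 0, hprod]
    ring
  have step2 : ∀ a, ∑ e : Fin N → Fin K, ∏ j, h a j (e j) = ∏ j, ∑ c, h a j c := by
    intro a
    rw [Fintype.prod_sum (fun j c => h a j c)]
  have step3 : ∀ a, ∏ j, ∑ c, h a j c
      = p a * ∑ c, (if c = a then p a + δ * (1 - p a) else p c * (1 - δ)) * F a c := by
    intro a
    rw [← Finset.mul_prod_erase univ _ (mem_univ (0 : Fin N))]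
    congr 1
    · simp only [hh, if_pos rfl]
      rw [Finset.sum_ite_eq' univ a, if_pos (mem_univ _)]
    · rw [Finset.prod_eq_single_of_mem τ hτmem]
      · simp [hh, if_neg hτ]
      · intro b hb hbτ
        have hb0 : b ≠ 0 := Finset.ne_of_mem_erase hb
        simp only [hh, if_neg hb0, if_neg hbτ, mul_one]
        exact sum_w p δ hsum a
  rw [fkE]
  simp only [step1]
  rw [Finset.sum_comm]
  exact Finset.sum_congr rfl fun a _ => (step2 a).trans (step3 a)


/-- `Cov([ε₁ = i],[ε_τ = j]) = δ·pᵢ(1−pᵢ)` if `i = j` and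
`−δ·pᵢ·p_j` otherwise, for all `τ ≥ 2`. -/
theorem fkP_cov_first (K N : ℕ) (hK : 1 ≤ K) [NeZero N]
    (p : Fin K → ℝ) (hp : ∀ i, 0 < p i ∧ p i < 1) (hsum : ∑ i, p i = 1)
    (δ : ℝ) (hδ0 : 0 ≤ δ) (hδ1 : δ ≤ 1) (τ : Fin N) (hτ : τ ≠ 0)
    (i j : Fin K) :
    fkE p δ (fun e : Fin N → Fin K => (if e 0 = i then (1:ℝ) else 0) * (if e τ = j then 1 else 0))
      - fkE p δ (fun e : Fin N → Fin K => if e 0 = i then (1:ℝ) else 0)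
        * fkE p δ (fun e : Fin N → Fin K => if e τ = j then (1:ℝ) else 0)
      = if i = j then δ * p i * (1 - p i) else -(δ * p i * p j) := by
  classical
  have h1 := fkE_two p δ hsum τ hτ _
    (fun a c => (if a = i then (1:ℝ) else 0) * (if c = j then 1 else 0)) (fun e => rfl)
  have h2 := fkE_two p δ hsum τ hτ _
    (fun a _ => if a = i then (1:ℝ) else 0) (fun e => rfl)
  have h3 := fkE_two p δ hsum τ hτ _
    (fun _ c => if c = j then (1:ℝ) else 0) (fun e => rfl)
  have innerj : ∀ a : Fin K,
      ∑ c, (if c = a then p a + δ * (1 - p a) else p c * (1 - δ)) * (if c = j then (1:ℝ) else 0)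
        = (if j = a then p a + δ * (1 - p a) else p j * (1 - δ)) := by
    intro a
    simp only [mul_ite, mul_one, mul_zero]
    rw [Finset.sum_ite_eq' univ j, if_pos (mem_univ _)]
  have e1 : fkE p δ (fun e : Fin N → Fin K =>
      (if e 0 = i then (1:ℝ) else 0) * (if e τ = j then 1 else 0))
      = p i * (if j = i then p i + δ * (1 - p i) else p j * (1 - δ)) := by
    rw [h1]
    have : ∀ a : Fin K, p a * ∑ c,
        (if c = a then p a + δ * (1 - p a) else p c * (1 - δ))
          * ((if a = i then (1:ℝ) else 0) * (if c = j then 1 else 0))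
        = if a = i then p a * (if j = a then p a + δ * (1 - p a) else p j * (1 - δ)) else 0 := by
      intro a
      by_cases ha : a = i
      · simp only [ha, eq_self_iff_true, if_true, one_mul]
        rw [innerj i]
      · simp [ha]
    simp only [this]
    rw [Finset.sum_ite_eq' univ i, if_pos (mem_univ _)]
  have e2 : fkE p δ (fun e : Fin N → Fin K => if e 0 = i then (1:ℝ) else 0) = p i := by
    rw [h2]
    have : ∀ a : Fin K, p a * ∑ c,
        (if c = a then p a + δ * (1 - p a) else p c * (1 - δ)) * (if a = i then (1:ℝ) else 0)
        = if a = i then p a else 0 := by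
      intro a
      by_cases ha : a = i
      · simp only [ha, eq_self_iff_true, if_true, mul_one]
        rw [sum_w p δ hsum i, mul_one]
      · simp [ha]
    simp only [this]
    rw [Finset.sum_ite_eq' univ i, if_pos (mem_univ _)]
  have e3 : fkE p δ (fun e : Fin N → Fin K => if e τ = j then (1:ℝ) else 0) = p j := by
    rw [h3]
    simp only [innerj]
    exact sum_pw p δ hsum j
  rw [e1, e2, e3]
  by_cases hij : i = j
  · subst hij; rw [if_pos rfl, if_pos rfl]; ring
  · rw [if_neg (fun h => hij h.symm), if_neg hij]; ring
end

section
/- For 2 ≤ ι < τ, P(ε_ι = i, ε_τ = i) = p_i·(p_i^+)^2 + (p_i^-)^2·(1 − p_i), and for j ≠ i, P(ε_ι = i, ε_τ = j) = p_i·p_i^+·p_j^- + p_j·p_i^-·p_j^+ + ∑_{l≠i,l≠j} p_l·p_i^-·p_j^-. -/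
open Finset

/-- for `2 ≤ ι < τ`,
`P(ε_ι = i, ε_τ = i) = pᵢ·(pᵢ⁺)² + (pᵢ⁻)²·(1−pᵢ)` and for `j ≠ i`
`P(ε_ι = i, ε_τ = j) = pᵢ·pᵢ⁺·p_j⁻ + p_j·pᵢ⁻·p_j⁺ + ∑_{l≠i,j} p_l·pᵢ⁻·p_j⁻`. -/
theorem fkP_joint_later (K N : ℕ) (hK : 1 ≤ K) [NeZero N]
    (p : Fin K → ℝ) (hp : ∀ i, 0 < p i ∧ p i < 1) (hsum : ∑ i, p i = 1)
    (δ : ℝ) (hδ0 : 0 ≤ δ) (hδ1 : δ ≤ 1) (ι τ : Fin N) (hι : ι ≠ 0)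
    (hιτ : ι < τ) (i j : Fin K) :
    ∑ e ∈ Finset.univ.filter (fun e : Fin N → Fin K => e ι = i ∧ e τ = j),
        fkP p δ e
      = if j = i then
          p i * (p i + δ * (1 - p i)) ^ 2 + (p i * (1 - δ)) ^ 2 * (1 - p i)
        else
          p i * (p i + δ * (1 - p i)) * (p j * (1 - δ))
            + p j * (p i * (1 - δ)) * (p j + δ * (1 - p j))
            + ∑ l ∈ (Finset.univ.erase i).erase j,
                p l * (p i * (1 - δ)) * (p j * (1 - δ)) := by
  classical
  have hτ0 : τ ≠ 0 := by
    intro h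
    have : (0 : Fin N) < τ := lt_of_le_of_lt (Fin.zero_le ι) hιτ
    rw [h] at this
    exact lt_irrefl _ this
  have hιτ' : ι ≠ τ := ne_of_lt hιτ
  set f : Fin K → Fin K → ℝ :=
    fun a b => if b = a then p a + δ * (1 - p a) else p b * (1 - δ) with hf
  have herase : ∀ a : Fin K, ∑ b ∈ univ.erase a, p b = 1 - p a := by
    intro a
    have h := Finset.add_sum_erase univ p (mem_univ a)
    rw [hsum] at h
    linarith
  have hsumf : ∀ a, ∑ b, f a b = 1 := by
    intro a
    rw [← Finset.add_sum_erase univ (f a) (mem_univ a)]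
    have h2 : ∑ b ∈ univ.erase a, f a b = (1 - p a) * (1 - δ) := by
      rw [← herase a, Finset.sum_mul]
      refine Finset.sum_congr rfl fun b hb => ?_
      simp [hf, Finset.ne_of_mem_erase hb]
    rw [h2]
    simp only [hf, if_pos rfl]
    ring
  have key : ∀ a : Fin K,
      ∑ e ∈ univ.filter (fun e : Fin N → Fin K => e 0 = a ∧ e ι = i ∧ e τ = j),
        fkP p δ e = p a * f a i * f a j := by
    intro a
    set t : Fin N → Finset (Fin K) := fun k =>
      if k = 0 then {a} else if k = ι then {i} else if k = τ then {j} else univ with ht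
    set G : Fin N → Fin K → ℝ := fun k b => if k = 0 then p b else f a b with hG
    have hfilter : univ.filter (fun e : Fin N → Fin K => e 0 = a ∧ e ι = i ∧ e τ = j)
        = Fintype.piFinset t := by
      ext e
      simp only [Finset.mem_filter, mem_univ, true_and, Fintype.mem_piFinset, ht]
      constructor
      · rintro ⟨h0, h1, h2⟩ k
        split_ifs with hk0 hkι hkτ <;> simp_all
      · intro h
        refine ⟨?_, ?_, ?_⟩
        · have := h 0; simpa using this
        · have := h ι; simpa [hι] using this
        · have := h τ; simpa [hτ0, Ne.symm hιτ'] using this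
    have hprod : ∀ e ∈ Fintype.piFinset t, fkP p δ e = ∏ k, G k (e k) := by
      intro e he
      have h0 : e 0 = a := by
        have := Fintype.mem_piFinset.mp he 0
        simpa [ht] using this
      have hset : univ.erase (0 : Fin N) = univ.filter (fun k => ¬ k = 0) := by
        ext k; simp
      rw [Fintype.prod_eq_mul_prod_compl 0, Finset.compl_singleton, hset, fkP, h0]
      have hfac : ∀ k ∈ univ.filter (fun k : Fin N => ¬ k = 0),
          (if e k = a then p a + δ * (1 - p a) else p (e k) * (1 - δ)) = G k (e k) := by
        intro k hk
        have hk0 : ¬ k = 0 := (Finset.mem_filter.mp hk).2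
        simp [hG, hf, hk0]
      rw [Finset.prod_congr rfl hfac]
      simp [hG]
    rw [hfilter, Finset.sum_congr rfl hprod, ← Finset.prod_univ_sum]
    have hout : ∀ k ∈ (univ : Finset (Fin N)), k ∉ ({0, ι, τ} : Finset (Fin N)) →
        ∑ b ∈ t k, G k b = 1 := by
      intro k _ hk
      simp only [Finset.mem_insert, Finset.mem_singleton, not_or] at hk
      obtain ⟨hk0, hkι, hkτ⟩ := hk
      simp only [ht, hG, if_neg hk0, if_neg hkι, if_neg hkτ]
      exact hsumf a
    rw [← Finset.prod_subset (Finset.subset_univ ({0, ι, τ} : Finset (Fin N))) hout]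
    have h0mem : (0 : Fin N) ∉ ({ι, τ} : Finset (Fin N)) := by
      simp [Ne.symm hι, Ne.symm hτ0]
    have hιmem : ι ∉ ({τ} : Finset (Fin N)) := by simp [hιτ']
    rw [Finset.prod_insert h0mem, Finset.prod_insert hιmem, Finset.prod_singleton]
    simp only [ht, hG, if_pos rfl, if_neg hι, if_neg hτ0, if_neg (Ne.symm hιτ')]
    rw [if_neg hιτ']
    simp [mul_assoc]
  have hsplit : ∑ e ∈ univ.filter (fun e : Fin N → Fin K => e ι = i ∧ e τ = j), fkP p δ e
      = ∑ a, p a * f a i * f a j := by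
    rw [← Finset.sum_fiberwise (univ.filter fun e : Fin N → Fin K => e ι = i ∧ e τ = j)
      (fun e => e 0) (fkP p δ)]
    refine Finset.sum_congr rfl fun a _ => ?_
    rw [← key a]
    congr 1
    ext e
    simp only [Finset.mem_filter, mem_univ, true_and]
    tauto
  rw [hsplit]
  by_cases hji : j = i
  · subst hji
    rw [if_pos rfl, ← Finset.add_sum_erase univ _ (mem_univ j)]
    have h2 : ∑ a ∈ univ.erase j, p a * f a j * f a j
        = (1 - p j) * ((p j * (1 - δ)) * (p j * (1 - δ))) := by
      rw [← herase j, Finset.sum_mul]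
      refine Finset.sum_congr rfl fun a ha => ?_
      have : f a j = p j * (1 - δ) := by
        simp [hf, Ne.symm (Finset.ne_of_mem_erase ha)]
      rw [this]; ring
    rw [h2]
    simp only [hf, if_pos rfl]
    ring
  · rw [if_neg hji, ← Finset.add_sum_erase univ _ (mem_univ i),
      ← Finset.add_sum_erase (univ.erase i) _ (Finset.mem_erase.mpr ⟨hji, mem_univ j⟩)]
    have hrest : ∑ a ∈ (univ.erase i).erase j, p a * f a i * f a j
        = ∑ l ∈ (univ.erase i).erase j, p l * (p i * (1 - δ)) * (p j * (1 - δ)) := by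
      refine Finset.sum_congr rfl fun a ha => ?_
      have hai : a ≠ i := Finset.ne_of_mem_erase (Finset.mem_of_mem_erase ha)
      have haj : a ≠ j := Finset.ne_of_mem_erase ha
      simp [hf, Ne.symm hai, Ne.symm haj]
    rw [hrest]
    simp only [hf, if_pos rfl, if_neg hji, if_neg (fun h => hji (h.symm ▸ rfl) : ¬ i = j)]
    rw [← add_assoc]
end

section
/- For 2 ≤ ι < τ, Cov([ε_ι = i],[ε_τ = j]) equals δ²·p_i(1−p_i) if i = j and −δ²·p_i·p_j if i ≠ j. -/
open Finset

/-- conditional one-step kernel -/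
noncomputable def fkQ {K : ℕ} (p : Fin K → ℝ) (δ : ℝ) (k m : Fin K) : ℝ :=
  p k * (1 - δ) + δ * (if k = m then 1 else 0)

lemma fkP_eq {K N : ℕ} [NeZero N] (p : Fin K → ℝ) (δ : ℝ) (e : Fin N → Fin K) :
    fkP p δ e = p (e 0) *
      ∏ j ∈ Finset.univ.filter (fun j : Fin N => j ≠ 0), fkQ p δ (e j) (e 0) := by
  unfold fkP fkQ
  congr 1
  refine Finset.prod_congr rfl fun j _ => ?_
  split_ifs with h
  · rw [h]; ring
  · ring

/-- key factorization lemma -/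
lemma fkE_prod {K N : ℕ} [NeZero N] (p : Fin K → ℝ) (δ : ℝ)
    (g : Fin N → Fin K → ℝ) :
    fkE p δ (fun e => ∏ j ∈ Finset.univ.filter (fun j : Fin N => j ≠ 0), g j (e j))
      = ∑ m, p m * ∏ j ∈ Finset.univ.filter (fun j : Fin N => j ≠ 0),
          (∑ k, fkQ p δ k m * g j k) := by
  unfold fkE
  have h1 : ∀ e : Fin N → Fin K, fkP p δ e *
      (∏ j ∈ Finset.univ.filter (fun j : Fin N => j ≠ 0), g j (e j))
      = p (e 0) * ∏ j ∈ Finset.univ.filter (fun j : Fin N => j ≠ 0),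
          (fkQ p δ (e j) (e 0) * g j (e j)) := by
    intro e
    rw [fkP_eq, Finset.prod_mul_distrib, mul_assoc]
  simp only [h1]
  rw [← Equiv.sum_comp (Equiv.funSplitAt (0 : Fin N) (Fin K)).symm]
  rw [Fintype.sum_prod_type]
  refine Finset.sum_congr rfl fun m _ => ?_
  have hz : (Equiv.funSplitAt (0 : Fin N) (Fin K)).symm ∘ (Prod.mk m) = fun e' =>
      (Equiv.funSplitAt (0 : Fin N) (Fin K)).symm (m, e') := rfl
  have key : ∀ e' : { j : Fin N // j ≠ 0 } → Fin K,
      ((Equiv.funSplitAt (0 : Fin N) (Fin K)).symm (m, e')) 0 = m := by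
    intro e'; simp
  have key2 : ∀ (e' : { j : Fin N // j ≠ 0 } → Fin K) (j : Fin N) (hj : j ≠ 0),
      ((Equiv.funSplitAt (0 : Fin N) (Fin K)).symm (m, e')) j = e' ⟨j, hj⟩ := by
    intro e' j hj; simp [hj]
  have h2 : ∀ e' : { j : Fin N // j ≠ 0 } → Fin K,
      (fun e => p (e 0) * ∏ j ∈ Finset.univ.filter (fun j : Fin N => j ≠ 0),
          (fkQ p δ (e j) (e 0) * g j (e j)))
        ((Equiv.funSplitAt (0 : Fin N) (Fin K)).symm (m, e'))
      = p m * ∏ j : { j : Fin N // j ≠ 0 }, (fkQ p δ (e' j) m * g j (e' j)) := by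
    intro e'
    dsimp only
    rw [key]
    congr 1
    rw [Finset.prod_subtype (p := fun j : Fin N => j ≠ 0)
      (Finset.univ.filter (fun j : Fin N => j ≠ 0))
      (by simp) (fun j => fkQ p δ
        (((Equiv.funSplitAt (0 : Fin N) (Fin K)).symm (m, e')) j) m *
        g j (((Equiv.funSplitAt (0 : Fin N) (Fin K)).symm (m, e')) j))]
    refine Finset.prod_congr rfl fun j _ => ?_
    rw [key2 e' j.1 j.2]
  simp only [h2]
  rw [← Finset.mul_sum]
  have h3 : (∑ e' : { j : Fin N // j ≠ 0 } → Fin K,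
      ∏ j : { j : Fin N // j ≠ 0 }, (fkQ p δ (e' j) m * g j (e' j)))
      = ∏ j : { j : Fin N // j ≠ 0 }, ∑ k, fkQ p δ k m * g j k :=
    (Fintype.prod_sum (fun (j : { j : Fin N // j ≠ 0 }) (k : Fin K) =>
      fkQ p δ k m * g j k)).symm
  rw [h3]
  congr 1
  rw [Finset.prod_subtype (p := fun j : Fin N => j ≠ 0)
    (Finset.univ.filter (fun j : Fin N => j ≠ 0))
    (by simp) (fun j => ∑ k, fkQ p δ k m * g j k)]

lemma fkQ_sum {K : ℕ} (p : Fin K → ℝ) (hsum : ∑ i, p i = 1) (δ : ℝ) (m : Fin K) :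
    ∑ k, fkQ p δ k m = 1 := by
  unfold fkQ
  rw [Finset.sum_add_distrib, ← Finset.sum_mul, hsum, ← Finset.mul_sum]
  simp [Finset.sum_ite_eq']

lemma fkQ_psum {K : ℕ} (p : Fin K → ℝ) (hsum : ∑ i, p i = 1) (δ : ℝ) (i : Fin K) :
    ∑ m, p m * fkQ p δ i m = p i := by
  unfold fkQ
  simp only [mul_add, mul_ite, mul_one, mul_zero]
  rw [Finset.sum_add_distrib, ← Finset.sum_mul, hsum]
  rw [Finset.sum_ite_eq]
  simp
  ring


lemma fkE_single {K N : ℕ} [NeZero N] (p : Fin K → ℝ) (hsum : ∑ i, p i = 1)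
    (δ : ℝ) (ι : Fin N) (hι : ι ≠ 0) (i : Fin K) :
    fkE p δ (fun e : Fin N → Fin K => if e ι = i then (1:ℝ) else 0) = p i := by
  have hmem : ι ∈ Finset.univ.filter (fun j : Fin N => j ≠ 0) := by simp [hι]
  have hf : (fun e : Fin N → Fin K => if e ι = i then (1:ℝ) else 0)
      = fun e => ∏ j ∈ Finset.univ.filter (fun j : Fin N => j ≠ 0),
          (fun (j : Fin N) (k : Fin K) => if j = ι then (if k = i then (1:ℝ) else 0) else 1) j (e j) := by
    funext e
    rw [Finset.prod_ite_eq' (Finset.univ.filter (fun j : Fin N => j ≠ 0)) ι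
      (fun j => if e j = i then (1:ℝ) else 0), if_pos hmem]
  rw [hf, fkE_prod p δ (fun (j : Fin N) (k : Fin K) =>
    if j = ι then (if k = i then (1:ℝ) else 0) else 1)]
  have hinner : ∀ m : Fin K, ∀ j ∈ Finset.univ.filter (fun j : Fin N => j ≠ 0),
      (∑ k, fkQ p δ k m *
        (if j = ι then (if k = i then (1:ℝ) else 0) else 1))
      = if j = ι then fkQ p δ i m else 1 := by
    intro m j _
    split_ifs with h
    · simp [mul_ite, Finset.sum_ite_eq']
    · simp only [mul_one]
      exact fkQ_sum p hsum δ m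
  calc ∑ m, p m * ∏ j ∈ Finset.univ.filter (fun j : Fin N => j ≠ 0),
        (∑ k, fkQ p δ k m * (if j = ι then (if k = i then (1:ℝ) else 0) else 1))
      = ∑ m, p m * fkQ p δ i m := by
        refine Finset.sum_congr rfl fun m _ => ?_
        congr 1
        rw [Finset.prod_congr rfl (hinner m),
          Finset.prod_ite_eq' (Finset.univ.filter (fun j : Fin N => j ≠ 0)) ι
            (fun _ => fkQ p δ i m), if_pos hmem]
    _ = p i := fkQ_psum p hsum δ i

lemma fkE_pair {K N : ℕ} [NeZero N] (p : Fin K → ℝ) (hsum : ∑ i, p i = 1)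
    (δ : ℝ) (ι τ : Fin N) (hι : ι ≠ 0) (hτ : τ ≠ 0) (hιτ : ι ≠ τ) (i j : Fin K) :
    fkE p δ (fun e : Fin N → Fin K =>
        (if e ι = i then (1:ℝ) else 0) * (if e τ = j then 1 else 0))
      = ∑ m, p m * (fkQ p δ i m * fkQ p δ j m) := by
  have hmemι : ι ∈ Finset.univ.filter (fun j : Fin N => j ≠ 0) := by simp [hι]
  have hmemτ : τ ∈ Finset.univ.filter (fun j : Fin N => j ≠ 0) := by simp [hτ]
  have hf : (fun e : Fin N → Fin K =>
        (if e ι = i then (1:ℝ) else 0) * (if e τ = j then 1 else 0))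
      = fun e => ∏ j' ∈ Finset.univ.filter (fun j' : Fin N => j' ≠ 0),
          (fun (j' : Fin N) (k : Fin K) =>
            (if j' = ι then (if k = i then (1:ℝ) else 0) else 1) *
            (if j' = τ then (if k = j then (1:ℝ) else 0) else 1)) j' (e j') := by
    funext e
    rw [Finset.prod_mul_distrib,
      Finset.prod_ite_eq' (Finset.univ.filter (fun j' : Fin N => j' ≠ 0)) ι
        (fun j' => if e j' = i then (1:ℝ) else 0), if_pos hmemι,
      Finset.prod_ite_eq' (Finset.univ.filter (fun j' : Fin N => j' ≠ 0)) τ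
        (fun j' => if e j' = j then (1:ℝ) else 0), if_pos hmemτ]
  rw [hf, fkE_prod p δ (fun (j' : Fin N) (k : Fin K) =>
    (if j' = ι then (if k = i then (1:ℝ) else 0) else 1) *
    (if j' = τ then (if k = j then (1:ℝ) else 0) else 1))]
  have hinner : ∀ m : Fin K, ∀ j' ∈ Finset.univ.filter (fun j' : Fin N => j' ≠ 0),
      (∑ k, fkQ p δ k m *
        ((if j' = ι then (if k = i then (1:ℝ) else 0) else 1) *
         (if j' = τ then (if k = j then (1:ℝ) else 0) else 1)))
      = (if j' = ι then fkQ p δ i m else 1) * (if j' = τ then fkQ p δ j m else 1) := by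
    intro m j' _
    have hτι : ¬ τ = ι := fun h => hιτ h.symm
    by_cases h1 : j' = ι
    · have h2 : ¬ j' = τ := by rw [h1]; exact hιτ
      simp [h1, h2, hιτ, mul_ite, Finset.sum_ite_eq']
    · by_cases h2 : j' = τ
      · simp [h1, h2, hτι, mul_ite, Finset.sum_ite_eq']
      · simp only [h1, h2, if_false, mul_one]
        exact fkQ_sum p hsum δ m
  refine Finset.sum_congr rfl fun m _ => ?_
  congr 1
  rw [Finset.prod_congr rfl (hinner m), Finset.prod_mul_distrib,
    Finset.prod_ite_eq' (Finset.univ.filter (fun j' : Fin N => j' ≠ 0)) ι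
      (fun _ => fkQ p δ i m), if_pos hmemι,
    Finset.prod_ite_eq' (Finset.univ.filter (fun j' : Fin N => j' ≠ 0)) τ
      (fun _ => fkQ p δ j m), if_pos hmemτ]

/-- for `2 ≤ ι < τ`, `Cov([ε_ι = i],[ε_τ = j]) = δ²·pᵢ(1−pᵢ)`
if `i = j` and `−δ²·pᵢ·p_j` otherwise. -/
theorem fkP_cov_later (K N : ℕ) (hK : 1 ≤ K) [NeZero N]
    (p : Fin K → ℝ) (hp : ∀ i, 0 < p i ∧ p i < 1) (hsum : ∑ i, p i = 1)
    (δ : ℝ) (hδ0 : 0 ≤ δ) (hδ1 : δ ≤ 1) (ι τ : Fin N) (hι : ι ≠ 0)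
    (hιτ : ι < τ) (i j : Fin K) :
    fkE p δ (fun e : Fin N → Fin K =>
        (if e ι = i then (1:ℝ) else 0) * (if e τ = j then 1 else 0))
      - fkE p δ (fun e : Fin N → Fin K => if e ι = i then (1:ℝ) else 0)
        * fkE p δ (fun e : Fin N → Fin K => if e τ = j then (1:ℝ) else 0)
      = if i = j then δ ^ 2 * p i * (1 - p i) else -(δ ^ 2 * p i * p j) := by
  have hτ : τ ≠ 0 := by
    rintro rfl
    rw [Fin.lt_def] at hιτ
    simp at hιτ
  have hne : ι ≠ τ := Fin.ne_of_lt hιτ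
  rw [fkE_pair p hsum δ ι τ hι hτ hne i j, fkE_single p hsum δ ι hι i,
    fkE_single p hsum δ τ hτ j]
  have hS : ∑ m, p m * (fkQ p δ i m * fkQ p δ j m)
      = p i * p j * (1-δ)^2 + 2*(δ*(1-δ)*(p i * p j))
        + δ^2 * (if i = j then p i else 0) := by
    have step : ∀ m : Fin K, p m * (fkQ p δ i m * fkQ p δ j m)
        = p i*p j*(1-δ)^2 * p m + δ*(1-δ)*p i * (if j = m then p m else 0)
          + δ*(1-δ)*p j*(if i = m then p m else 0)
          + δ^2 * (if i = m then (if j = m then p m else 0) else 0) := by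
      intro m
      by_cases h1 : i = m <;> by_cases h2 : j = m <;>
        simp [fkQ, h1, h2] <;> ring
    rw [Finset.sum_congr rfl (fun m _ => step m)]
    simp only [Finset.sum_add_distrib, ← Finset.mul_sum, hsum,
      Finset.sum_ite_eq, Finset.mem_univ, if_true, mul_one]
    have : ∀ h : ¬ i = j, ¬ j = i := fun h h' => h h'.symm
    by_cases hij : i = j <;> simp [hij, this] <;> ring
  rw [hS]
  by_cases hij : i = j
  · subst hij; simp; ring
  · simp [hij]; ring
end

section
/- Let X_i = ∑_{j=1}^N [ε_j = i] be the category counts of an FK-dependent sequence of length N. Then for any count vector x = (x_1,...,x_K) of nonnegative integers summing to N, P(X = x) = ∑_{i=1}^K p_i·((N−1)!/((x_i−1)!·∏_{j≠i} x_j!))·(p_i^+)^{x_i−1}·∏_{j≠i}(p_j^-)^{x_j}, where terms with x_i = 0 are interpreted as 0. -/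
open Finset

/-- Number of coordinates of the sequence `e` equal to category `i`. -/
def fkCount {K N : ℕ} (i : Fin K) (e : Fin N → Fin K) : ℕ :=
  (Finset.univ.filter (fun j : Fin N => e j = i)).card



lemma fkCount_cons {K M : ℕ} (l i : Fin K) (f : Fin M → Fin K) :
    fkCount l (Fin.cons i f) = (if i = l then 1 else 0) + fkCount l f := by
  simp only [fkCount, Finset.card_filter, Fin.sum_univ_succ, Fin.cons_zero, Fin.cons_succ]

lemma erase_zero_eq_map (M : ℕ) :
    (Finset.univ.erase (0 : Fin (M+1))) = Finset.univ.map ⟨Fin.succ, Fin.succ_injective M⟩ := by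
  ext j
  simp [Fin.exists_succ_eq]

lemma prod_erase_zero {β : Type*} [CommMonoid β] (M : ℕ) (h : Fin (M+1) → β) :
    ∏ j ∈ Finset.univ.erase (0 : Fin (M+1)), h j = ∏ j : Fin M, h j.succ := by
  rw [erase_zero_eq_map, Finset.prod_map]
  rfl

lemma prod_count {K M : ℕ} (g : Fin K → ℝ) (f : Fin M → Fin K) :
    ∏ j, g (f j) = ∏ l, g l ^ (fkCount l f) := by
  rw [← Finset.prod_fiberwise_of_maps_to (t := Finset.univ) (g := f)
      (fun i _ => Finset.mem_univ _) (fun j => g (f j))]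
  refine Finset.prod_congr rfl fun l _ => ?_
  rw [fkCount, ← Finset.prod_const]
  exact Finset.prod_congr rfl fun j hj => by rw [(Finset.mem_filter.mp hj).2]

lemma mem_cons_iff {K M : ℕ} (i : Fin K) (y : Fin K → ℕ) (hyi : 1 ≤ y i) (f : Fin M → Fin K) :
    (∀ l, fkCount l (Fin.cons i f) = y l) ↔
      (∀ l, fkCount l f = Function.update y i (y i - 1) l) := by
  constructor
  · intro H l
    have := H l
    rw [fkCount_cons] at this
    by_cases h : l = i
    · subst h; simp only [Function.update_self]; simp at this; omega
    · rw [Function.update_of_ne h]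
      simpa [Ne.symm h] using this
  · intro H l
    rw [fkCount_cons]
    have := H l
    by_cases h : l = i
    · subst h; simp only [Function.update_self] at this; simp [this]; omega
    · rw [Function.update_of_ne h] at this; simpa [Ne.symm h] using this

lemma sum_update_pred {K : ℕ} (i : Fin K) (y : Fin K → ℕ) (hyi : 1 ≤ y i) :
    ∑ l, Function.update y i (y i - 1) l = (∑ l, y l) - 1 := by
  rw [Finset.sum_update_of_mem (Finset.mem_univ i)]
  rw [← Finset.add_sum_erase _ y (Finset.mem_univ i), Finset.sdiff_singleton_eq_erase]
  omega

lemma prod_fact_update {K : ℕ} (i : Fin K) (y : Fin K → ℕ) (hyi : 1 ≤ y i) :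
    y i * ∏ l, Nat.factorial (Function.update y i (y i - 1) l) = ∏ l, Nat.factorial (y l) := by
  rw [← Finset.mul_prod_erase _ _ (Finset.mem_univ i), ← Finset.mul_prod_erase _ (fun l => Nat.factorial (y l)) (Finset.mem_univ i)]
  rw [Function.update_self, ← mul_assoc, Nat.mul_factorial_pred (by omega)]
  congr 1
  exact Finset.prod_congr rfl fun l hl => by
    rw [Function.update_of_ne (Finset.ne_of_mem_erase hl)]

lemma fiber_card {K M : ℕ} (i : Fin K) (y : Fin K → ℕ) (hyi : 1 ≤ y i) :
    ((Finset.univ.filter (fun e : Fin (M+1) → Fin K => ∀ l, fkCount l e = y l)).filter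
        (fun e => e 0 = i)).card
      = (Finset.univ.filter (fun f : Fin M → Fin K =>
          ∀ l, fkCount l f = Function.update y i (y i - 1) l)).card := by
  apply Finset.card_nbij' (i := fun e => Fin.tail e) (j := fun f => Fin.cons i f)
  · intro e he
    simp only [Finset.mem_coe, Finset.mem_filter, Finset.mem_univ, true_and] at he ⊢
    obtain ⟨h1, h2⟩ := he
    rw [← mem_cons_iff i y hyi]
    rw [← h2, Fin.cons_self_tail]
    exact h1
  · intro f hf
    simp only [Finset.mem_coe, Finset.mem_filter, Finset.mem_univ, true_and] at hf ⊢
    exact ⟨(mem_cons_iff i y hyi f).mpr hf, rfl⟩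
  · intro e he
    simp only [Finset.mem_coe, Finset.mem_filter] at he
    simp only [← he.2, Fin.cons_self_tail]
  · intro f _
    funext j
    simp [Fin.tail]

lemma fiber_empty {K M : ℕ} (i : Fin K) (y : Fin K → ℕ) (hyi : y i = 0) :
    ((Finset.univ.filter (fun e : Fin (M+1) → Fin K => ∀ l, fkCount l e = y l)).filter
        (fun e => e 0 = i)) = ∅ := by
  rw [Finset.eq_empty_iff_forall_notMem]
  intro e he
  simp only [Finset.mem_filter, Finset.mem_univ, true_and] at he
  obtain ⟨h1, h2⟩ := he
  have := h1 i
  rw [hyi] at this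
  have h0 : (0 : Fin (M+1)) ∈ Finset.univ.filter (fun j => e j = i) := by
    simp [h2]
  rw [fkCount, Finset.card_eq_zero] at this
  rw [this] at h0
  simp at h0

lemma count_card {K : ℕ} : ∀ (M : ℕ) (y : Fin K → ℕ), (∑ i, y i = M) →
    ((Finset.univ.filter (fun e : Fin M → Fin K => ∀ i, fkCount i e = y i)).card)
      * ∏ i, Nat.factorial (y i) = Nat.factorial M := by
  intro M
  induction M with
  | zero =>
    intro y hy
    have hy' : ∀ i, y i = 0 := by
      intro i
      have := Finset.sum_eq_zero_iff.mp hy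
      exact this i (Finset.mem_univ i)
    have : (Finset.univ.filter (fun e : Fin 0 → Fin K => ∀ i, fkCount i e = y i)) = Finset.univ := by
      rw [Finset.filter_eq_self]
      intro e _ i
      simp [fkCount, hy' i, Finset.filter_eq_empty_iff]
    rw [this]
    simp [hy', Fintype.card_fun]
  | succ M ih =>
    intro y hy
    rw [Finset.card_eq_sum_card_fiberwise (f := fun e => e 0) (t := Finset.univ)
      (fun e _ => Finset.mem_univ _)]
    rw [Finset.sum_mul]
    have key : ∀ i : Fin K,
        ((Finset.univ.filter (fun e : Fin (M+1) → Fin K => ∀ l, fkCount l e = y l)).filter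
          (fun e => e 0 = i)).card * ∏ l, Nat.factorial (y l) = y i * Nat.factorial M := by
      intro i
      by_cases hyi : y i = 0
      · rw [fiber_empty i y hyi, hyi]
        simp
      · have hyi' : 1 ≤ y i := Nat.one_le_iff_ne_zero.mpr hyi
        rw [fiber_card i y hyi', ← prod_fact_update i y hyi']
        rw [mul_left_comm]
        rw [ih _ (by rw [sum_update_pred i y hyi', hy]; omega)]
    calc ∑ i, ((Finset.univ.filter (fun e : Fin (M+1) → Fin K => ∀ l, fkCount l e = y l)).filter
          (fun e => e 0 = i)).card * ∏ l, Nat.factorial (y l)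
        = ∑ i, y i * Nat.factorial M := Finset.sum_congr rfl fun i _ => key i
      _ = (M+1) * Nat.factorial M := by rw [← Finset.sum_mul, hy]
      _ = Nat.factorial (M+1) := (Nat.factorial_succ M).symm


lemma fkP_cons {K M : ℕ} (p : Fin K → ℝ) (δ : ℝ) (i : Fin K) (f : Fin M → Fin K) :
    fkP p δ (Fin.cons i f) =
      p i * ∏ j : Fin M,
        (if f j = i then p i + δ * (1 - p i) else p (f j) * (1 - δ)) := by
  unfold fkP
  rw [Finset.filter_ne', prod_erase_zero]
  simp [Fin.cons_succ]

lemma prod_W_update {K : ℕ} (p : Fin K → ℝ) (δ : ℝ) (i : Fin K) (x : Fin K → ℕ)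
    (hxi : 1 ≤ x i) :
    ∏ l, (if l = i then p i + δ * (1 - p i) else p l * (1 - δ)) ^
        (Function.update x i (x i - 1) l)
      = (p i + δ * (1 - p i)) ^ (x i - 1) *
          ∏ l ∈ Finset.univ.erase i, (p l * (1 - δ)) ^ (x l) := by
  rw [← Finset.mul_prod_erase _ _ (Finset.mem_univ i)]
  rw [if_pos rfl, Function.update_self]
  congr 1
  refine Finset.prod_congr rfl fun l hl => ?_
  rw [if_neg (Finset.ne_of_mem_erase hl), Function.update_of_ne (Finset.ne_of_mem_erase hl)]

/-- the generalized multinomial distribution. For any count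
vector `x` of nonnegative integers summing to `N`,
`P(X = x) = ∑ᵢ pᵢ·((N−1)!/((xᵢ−1)!·∏_{j≠i} x_j!))·(pᵢ⁺)^{xᵢ−1}·∏_{j≠i}(p_j⁻)^{x_j}`,
terms with `xᵢ = 0` interpreted as 0. -/
theorem fk_generalized_multinomial (K N : ℕ) (hK : 1 ≤ K) [NeZero N]
    (p : Fin K → ℝ) (hp : ∀ i, 0 < p i ∧ p i < 1) (hsum : ∑ i, p i = 1)
    (δ : ℝ) (hδ0 : 0 ≤ δ) (hδ1 : δ ≤ 1)
    (x : Fin K → ℕ) (hx : ∑ i, x i = N) :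
    ∑ e ∈ Finset.univ.filter (fun e : Fin N → Fin K => ∀ i, fkCount i e = x i),
        fkP p δ e
      = ∑ i, (if x i = 0 then 0 else
          p i * ((Nat.factorial (N - 1) : ℝ) /
              ((Nat.factorial (x i - 1) : ℝ) *
                ∏ j ∈ Finset.univ.erase i, (Nat.factorial (x j) : ℝ)))
            * (p i + δ * (1 - p i)) ^ (x i - 1)
            * ∏ j ∈ Finset.univ.erase i, (p j * (1 - δ)) ^ (x j)) := by
  obtain ⟨M, rfl⟩ : ∃ M, N = M + 1 :=
    ⟨N - 1, (Nat.succ_pred_eq_of_pos (Nat.pos_of_ne_zero (NeZero.ne N))).symm⟩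
  rw [← Finset.sum_fiberwise_of_maps_to (t := Finset.univ) (g := fun e => e 0)
      (fun e _ => Finset.mem_univ _) (fkP p δ)]
  refine Finset.sum_congr rfl fun i _ => ?_
  by_cases hxi : x i = 0
  · rw [if_pos hxi, fiber_empty i x hxi, Finset.sum_empty]
  · rw [if_neg hxi]
    have hxi' : 1 ≤ x i := Nat.one_le_iff_ne_zero.mpr hxi
    set u := Function.update x i (x i - 1) with hu
    have hsum_u : ∑ l, u l = M := by rw [hu, sum_update_pred i x hxi', hx]; omega
    have step1 : ∑ e ∈ (Finset.univ.filter
          (fun e : Fin (M+1) → Fin K => ∀ l, fkCount l e = x l)).filter (fun e => e 0 = i),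
          fkP p δ e
        = ∑ f ∈ Finset.univ.filter (fun f : Fin M → Fin K => ∀ l, fkCount l f = u l),
            fkP p δ (Fin.cons i f) := by
      refine Finset.sum_nbij' (fun e => Fin.tail e) (fun f => Fin.cons i f) ?_ ?_ ?_ ?_ ?_
      · intro e he
        simp only [Finset.mem_filter, Finset.mem_univ, true_and] at he ⊢
        obtain ⟨h1, h2⟩ := he
        rw [hu, ← mem_cons_iff i x hxi', ← h2, Fin.cons_self_tail]
        exact h1
      · intro f hf
        simp only [Finset.mem_filter, Finset.mem_univ, true_and] at hf ⊢
        rw [hu] at hf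
        exact ⟨(mem_cons_iff i x hxi' f).mpr hf, rfl⟩
      · intro e he
        simp only [Finset.mem_filter] at he
        simp only [← he.2, Fin.cons_self_tail]
      · intro f _
        funext j
        simp [Fin.tail]
      · intro e he
        simp only [Finset.mem_filter] at he
        simp only [← he.2, Fin.cons_self_tail]
    rw [step1]
    have step2 : ∀ f ∈ Finset.univ.filter
          (fun f : Fin M → Fin K => ∀ l, fkCount l f = u l),
        fkP p δ (Fin.cons i f)
          = p i * ((p i + δ * (1 - p i)) ^ (x i - 1) *
              ∏ l ∈ Finset.univ.erase i, (p l * (1 - δ)) ^ (x l)) := by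
      intro f hf
      simp only [Finset.mem_filter, Finset.mem_univ, true_and] at hf
      rw [fkP_cons]
      congr 1
      have : ∀ j : Fin M, (if f j = i then p i + δ * (1 - p i) else p (f j) * (1 - δ))
          = (fun l => if l = i then p i + δ * (1 - p i) else p l * (1 - δ)) (f j) := by
        intro j; rfl
      calc ∏ j : Fin M, (if f j = i then p i + δ * (1 - p i) else p (f j) * (1 - δ))
          = ∏ l, (if l = i then p i + δ * (1 - p i) else p l * (1 - δ)) ^ (fkCount l f) := by
            rw [← prod_count]
        _ = ∏ l, (if l = i then p i + δ * (1 - p i) else p l * (1 - δ)) ^ (u l) := by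
            exact Finset.prod_congr rfl fun l _ => by rw [hf l]
        _ = _ := by rw [hu]; exact prod_W_update p δ i x hxi'
    rw [Finset.sum_congr rfl step2, Finset.sum_const, nsmul_eq_mul]
    have hcard : ((Finset.univ.filter
          (fun f : Fin M → Fin K => ∀ l, fkCount l f = u l)).card : ℝ)
        = (Nat.factorial M : ℝ) /
            ((Nat.factorial (x i - 1) : ℝ) * ∏ j ∈ Finset.univ.erase i, (Nat.factorial (x j) : ℝ)) := by
      have h1 := count_card M u hsum_u
      have h2 : ∏ l, Nat.factorial (u l)
          = Nat.factorial (x i - 1) * ∏ j ∈ Finset.univ.erase i, Nat.factorial (x j) := by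
        rw [← Finset.mul_prod_erase _ _ (Finset.mem_univ i), hu, Function.update_self]
        congr 1
        exact Finset.prod_congr rfl fun l hl => by
          rw [Function.update_of_ne (Finset.ne_of_mem_erase hl)]
      rw [h2] at h1
      have hpos : ((Nat.factorial (x i - 1) : ℝ) * ∏ j ∈ Finset.univ.erase i, (Nat.factorial (x j) : ℝ)) ≠ 0 := by
        positivity
      rw [eq_div_iff hpos]
      push_cast [← h1]
      ring
    rw [hcard]
    simp only [Nat.add_sub_cancel]
    ring
end

section
/- The generalized multinomial probability mass function sums to 1: ∑_{x_1+...+x_K = N, x_j ≥ 0} ∑_{i=1}^K p_i·((N−1)!/((x_i−1)!·∏_{j≠i} x_j!))·(p_i^+)^{x_i−1}·∏_{j≠i}(p_j^-)^{x_j} = 1, with terms where x_i = 0 interpreted as 0. -/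
open Finset

lemma multinomial_sum_pow (K M : ℕ) (q : Fin K → ℝ) :
    ∑ y ∈ Finset.Nat.antidiagonalTuple K M,
      ((Nat.factorial M : ℝ) / ∏ j, (Nat.factorial (y j) : ℝ)) * ∏ j, q j ^ y j
    = (∑ j, q j) ^ M := by
  rw [Finset.sum_pow_eq_sum_piAntidiag, Finset.piAntidiag_univ_fin_eq_antidiagonalTuple]
  refine Finset.sum_congr rfl fun y hy => ?_
  have hsum : ∑ j, y j = M := Finset.Nat.mem_antidiagonalTuple.mp hy
  congr 1
  have hspec := Nat.multinomial_spec (univ : Finset (Fin K)) y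
  rw [hsum] at hspec
  have h0 : (∏ j, (Nat.factorial (y j) : ℝ)) ≠ 0 := by
    refine Finset.prod_ne_zero_iff.mpr fun j _ => ?_
    exact_mod_cast (Nat.factorial_pos (y j)).ne'
  rw [div_eq_iff h0, mul_comm]
  exact_mod_cast hspec.symm

/-- the generalized multinomial pmf sums to 1 over all count
vectors `x` with `x₁ + ... + x_K = N` (terms with `xᵢ = 0` interpreted as 0). -/
theorem fk_generalized_multinomial_sums_to_one (K N : ℕ) (hK : 1 ≤ K)
    (hN : 1 ≤ N) (p : Fin K → ℝ) (hp : ∀ i, 0 < p i ∧ p i < 1)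
    (hsum : ∑ i, p i = 1) (δ : ℝ) (hδ0 : 0 ≤ δ) (hδ1 : δ ≤ 1) :
    ∑ x ∈ Finset.Nat.antidiagonalTuple K N,
      ∑ i, (if x i = 0 then 0 else
          p i * ((Nat.factorial (N - 1) : ℝ) /
              ((Nat.factorial (x i - 1) : ℝ) *
                ∏ j ∈ Finset.univ.erase i, (Nat.factorial (x j) : ℝ)))
            * (p i + δ * (1 - p i)) ^ (x i - 1)
            * ∏ j ∈ Finset.univ.erase i, (p j * (1 - δ)) ^ (x j)) = 1 := by
  rw [Finset.sum_comm]
  have key : ∀ i : Fin K,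
      ∑ x ∈ Finset.Nat.antidiagonalTuple K N,
        (if x i = 0 then 0 else
          p i * ((Nat.factorial (N - 1) : ℝ) /
              ((Nat.factorial (x i - 1) : ℝ) *
                ∏ j ∈ Finset.univ.erase i, (Nat.factorial (x j) : ℝ)))
            * (p i + δ * (1 - p i)) ^ (x i - 1)
            * ∏ j ∈ Finset.univ.erase i, (p j * (1 - δ)) ^ (x j)) = p i := by
    intro i
    set q : Fin K → ℝ := fun j => if j = i then p i + δ * (1 - p i) else p j * (1 - δ)
      with hq
    have hqsum : ∑ j, q j = 1 := by
      rw [← Finset.add_sum_erase _ q (Finset.mem_univ i)]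
      have h1 : ∑ j ∈ Finset.univ.erase i, q j
          = (∑ j ∈ Finset.univ.erase i, p j) * (1 - δ) := by
        rw [Finset.sum_mul]
        refine Finset.sum_congr rfl fun j hj => ?_
        simp [hq, Finset.ne_of_mem_erase hj]
      have h2 : p i + ∑ j ∈ Finset.univ.erase i, p j = 1 := by
        rw [Finset.add_sum_erase _ p (Finset.mem_univ i), hsum]
      rw [h1]
      have : q i = p i + δ * (1 - p i) := by simp [hq]
      rw [this]
      nlinarith [h2]
    refine Eq.trans (Finset.sum_congr rfl fun x _ => (ite_not _ _ _).symm) ?_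
    rw [← Finset.sum_filter]
    rw [Finset.sum_nbij' (i := fun x => Function.update x i (x i - 1))
      (j := fun y => Function.update y i (y i + 1))
      (t := Finset.Nat.antidiagonalTuple K (N - 1))
      (g := fun y => p i * (((Nat.factorial (N - 1) : ℝ) / ∏ j, (Nat.factorial (y j) : ℝ))
        * ∏ j, q j ^ y j))
      ?_ ?_ ?_ ?_ ?_]
    · rw [← Finset.mul_sum, multinomial_sum_pow, hqsum, one_pow, mul_one]
    · intro x hx
      simp only [Finset.mem_filter, Finset.Nat.mem_antidiagonalTuple] at hx ⊢
      obtain ⟨hx1, hx2⟩ := hx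
      rw [Finset.sum_update_of_mem (Finset.mem_univ i), ← Finset.erase_eq]
      rw [← Finset.add_sum_erase _ x (Finset.mem_univ i)] at hx1
      omega
    · intro y hy
      simp only [Finset.mem_filter, Finset.Nat.mem_antidiagonalTuple] at hy ⊢
      constructor
      · rw [Finset.sum_update_of_mem (Finset.mem_univ i), ← Finset.erase_eq]
        rw [← Finset.add_sum_erase _ y (Finset.mem_univ i)] at hy
        omega
      · simp [Function.update_self]
    · intro x hx
      simp only [Finset.mem_filter] at hx
      funext j
      rcases eq_or_ne j i with rfl | hji
      · simp only [Function.update_self]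
        omega
      · simp [Function.update_of_ne hji]
    · intro y hy
      funext j
      rcases eq_or_ne j i with rfl | hji
      · simp [Function.update_self]
      · simp [Function.update_of_ne hji]
    · intro x hx
      simp only [Finset.mem_filter, Finset.Nat.mem_antidiagonalTuple] at hx
      obtain ⟨hx1, hx2⟩ := hx
      have hfac : ∏ j, (Nat.factorial (Function.update x i (x i - 1) j) : ℝ)
          = (Nat.factorial (x i - 1) : ℝ) *
            ∏ j ∈ Finset.univ.erase i, (Nat.factorial (x j) : ℝ) := by
        rw [← Finset.mul_prod_erase _ _ (Finset.mem_univ i), Function.update_self]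
        congr 1
        exact Finset.prod_congr rfl fun j hj => by
          rw [Function.update_of_ne (Finset.ne_of_mem_erase hj)]
      have hprod : ∏ j, q j ^ Function.update x i (x i - 1) j
          = (p i + δ * (1 - p i)) ^ (x i - 1) *
            ∏ j ∈ Finset.univ.erase i, (p j * (1 - δ)) ^ (x j) := by
        rw [← Finset.mul_prod_erase _ _ (Finset.mem_univ i), Function.update_self]
        congr 1
        · simp [hq]
        · exact Finset.prod_congr rfl fun j hj => by
            rw [Function.update_of_ne (Finset.ne_of_mem_erase hj)]
            simp [hq, Finset.ne_of_mem_erase hj]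
      rw [hfac, hprod]
      ring
  rw [Finset.sum_congr rfl fun i _ => key i, hsum]
end

section
/- The moment generating function of the generalized multinomial count vector X is M_X(t) = ∑_{i=1}^K p_i·e^{t_i}·(p_i^+·e^{t_i} + ∑_{j≠i} p_j^-·e^{t_j})^{N−1}. -/
open Finset

theorem fk_mgf_aux (K N : ℕ) (hK : 1 ≤ K) [NeZero N]
    (p : Fin K → ℝ) (hp : ∀ i, 0 < p i ∧ p i < 1) (hsum : ∑ i, p i = 1)
    (δ : ℝ) (hδ0 : 0 ≤ δ) (hδ1 : δ ≤ 1) (t : Fin K → ℝ) :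
    ∑ e : Fin N → Fin K,
        (p (e 0) * ∏ j ∈ Finset.univ.filter (fun j : Fin N => j ≠ 0),
          (if e j = e 0 then p (e 0) + δ * (1 - p (e 0)) else p (e j) * (1 - δ)))
          * Real.exp (∑ i, t i * ((Finset.univ.filter (fun j : Fin N => e j = i)).card : ℝ))
      = ∑ i, p i * Real.exp (t i) *
          ((p i + δ * (1 - p i)) * Real.exp (t i)
            + ∑ j ∈ Finset.univ.erase i, p j * (1 - δ) * Real.exp (t j)) ^ (N - 1) := by
  classical
  set g : Fin K → Fin K → ℝ := fun i l =>
    (if l = i then p i + δ * (1 - p i) else p l * (1 - δ)) * Real.exp (t l) with hg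
  have key : ∀ e : Fin N → Fin K,
      (p (e 0) * ∏ j ∈ Finset.univ.filter (fun j : Fin N => j ≠ 0),
          (if e j = e 0 then p (e 0) + δ * (1 - p (e 0)) else p (e j) * (1 - δ)))
          * Real.exp (∑ i, t i * ((Finset.univ.filter (fun j : Fin N => e j = i)).card : ℝ))
      = (p (e 0) * Real.exp (t (e 0))) *
        ∏ j ∈ Finset.univ.filter (fun j : Fin N => j ≠ 0), g (e 0) (e j) := by
    intro e
    have h1 : ∑ i, t i * ((Finset.univ.filter (fun j : Fin N => e j = i)).card : ℝ)
        = ∑ j : Fin N, t (e j) := by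
      rw [← Finset.sum_fiberwise Finset.univ (fun j => e j) (fun j => t (e j))]
      refine Finset.sum_congr rfl fun i _ => ?_
      rw [Finset.sum_congr rfl (fun j hj => by
        simp only [Finset.mem_filter] at hj; rw [hj.2]), Finset.sum_const, nsmul_eq_mul,
        mul_comm]
    have h2 : ∑ j : Fin N, t (e j)
        = t (e 0) + ∑ j ∈ Finset.univ.filter (fun j : Fin N => j ≠ 0), t (e j) := by
      have h0 : Finset.univ.filter (fun j : Fin N => j = 0) = {0} := by
        ext j; simp
      rw [← Finset.sum_filter_add_sum_filter_not Finset.univ (fun j : Fin N => j = 0), h0,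
        Finset.sum_singleton]
    rw [h1, h2, Real.exp_add, Real.exp_sum, hg, Finset.prod_mul_distrib]
    ring
  simp_rw [key]
  rw [← Equiv.sum_comp (Equiv.funSplitAt (0 : Fin N) (Fin K)).symm, Fintype.sum_prod_type]
  refine Finset.sum_congr rfl fun i _ => ?_
  have he0 : ∀ f : {j : Fin N // j ≠ 0} → Fin K,
      (Equiv.funSplitAt (0 : Fin N) (Fin K)).symm (i, f) 0 = i := by
    intro f; simp
  have hej : ∀ (f : {j : Fin N // j ≠ 0} → Fin K) (j : {j : Fin N // j ≠ 0}),
      (Equiv.funSplitAt (0 : Fin N) (Fin K)).symm (i, f) j.1 = f j := by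
    intro f j; simp [j.2]
  have hprod : ∀ f : {j : Fin N // j ≠ 0} → Fin K,
      ∏ j ∈ Finset.univ.filter (fun j : Fin N => j ≠ 0),
        g i ((Equiv.funSplitAt (0 : Fin N) (Fin K)).symm (i, f) j)
      = ∏ j : {j : Fin N // j ≠ 0}, g i (f j) := by
    intro f
    rw [Finset.prod_subtype (p := fun j : Fin N => j ≠ 0)
      (Finset.univ.filter (fun j : Fin N => j ≠ 0))
      (fun x => by simp) (fun j => g i ((Equiv.funSplitAt (0 : Fin N) (Fin K)).symm (i, f) j))]
    exact Finset.prod_congr rfl fun j _ => by rw [hej]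
  calc ∑ f : {j : Fin N // j ≠ 0} → Fin K,
        (p ((Equiv.funSplitAt (0 : Fin N) (Fin K)).symm (i, f) 0)
          * Real.exp (t ((Equiv.funSplitAt (0 : Fin N) (Fin K)).symm (i, f) 0))) *
        ∏ j ∈ Finset.univ.filter (fun j : Fin N => j ≠ 0),
          g ((Equiv.funSplitAt (0 : Fin N) (Fin K)).symm (i, f) 0)
            ((Equiv.funSplitAt (0 : Fin N) (Fin K)).symm (i, f) j)
      = (p i * Real.exp (t i)) * ∑ f : {j : Fin N // j ≠ 0} → Fin K,
          ∏ j : {j : Fin N // j ≠ 0}, g i (f j) := by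
        rw [Finset.mul_sum]
        exact Finset.sum_congr rfl fun f _ => by rw [he0]; rw [hprod]
    _ = p i * Real.exp (t i) *
          ((p i + δ * (1 - p i)) * Real.exp (t i)
            + ∑ j ∈ Finset.univ.erase i, p j * (1 - δ) * Real.exp (t j)) ^ (N - 1) := by
        have hsumfun : ∑ f : {j : Fin N // j ≠ 0} → Fin K,
            ∏ j : {j : Fin N // j ≠ 0}, g i (f j)
            = (∑ l, g i l) ^ (N - 1) := by
          rw [← Fintype.piFinset_univ, ← Finset.prod_univ_sum, Finset.prod_const,
            Finset.card_univ]
          congr 1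
          simp [Fintype.card_subtype_compl]
        have hgl : ∑ l, g i l = (p i + δ * (1 - p i)) * Real.exp (t i)
            + ∑ j ∈ Finset.univ.erase i, p j * (1 - δ) * Real.exp (t j) := by
          rw [← Finset.add_sum_erase _ _ (Finset.mem_univ i)]
          congr 1
          · simp [hg]
          · exact Finset.sum_congr rfl fun l hl => by
              simp only [Finset.mem_erase] at hl
              simp [hg, hl.1]
        rw [hsumfun, hgl]

/-- the moment generating function of the generalized
multinomial count vector is
`M_X(t) = ∑ᵢ pᵢ·e^{tᵢ}·(pᵢ⁺·e^{tᵢ} + ∑_{j≠i} p_j⁻·e^{t_j})^{N−1}`. -/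
theorem fk_mgf (K N : ℕ) (hK : 1 ≤ K) [NeZero N]
    (p : Fin K → ℝ) (hp : ∀ i, 0 < p i ∧ p i < 1) (hsum : ∑ i, p i = 1)
    (δ : ℝ) (hδ0 : 0 ≤ δ) (hδ1 : δ ≤ 1) (t : Fin K → ℝ) :
    ∑ e : Fin N → Fin K,
        fkP p δ e * Real.exp (∑ i, t i * (fkCount i e : ℝ))
      = ∑ i, p i * Real.exp (t i) *
          ((p i + δ * (1 - p i)) * Real.exp (t i)
            + ∑ j ∈ Finset.univ.erase i, p j * (1 - δ) * Real.exp (t j)) ^ (N - 1) := by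
  simpa only [fkP, fkCount] using fk_mgf_aux K N hK p hp hsum δ hδ0 hδ1 t
end
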